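/- Let H < -1, C_1 = 2(H + sqrt(H^2 - 1)) < C < 0, and f(t) = sqrt((C - 2H + sqrt(4 + C^2 - 4CH)·sin(2·sqrt(H^2-1)·t))/(2H^2 - 2)). Then f satisfies the differential identity (f'(t))^2 + f(t)^(-2) + (H^2 - 1) f(t)^2 + 2H = C for all t ∈ ℝ. -/

import Mathlib

open Real

/-- The explicit profile function `f` from the hyperbolic rotational construction. -/
noncomputable def profileF (H C : ℝ) (t : ℝ) : ℝ :=
  Real.sqrt ((C - 2 * H + Real.sqrt (4 + C ^ 2 - 4 * C * H) *
      Real.sin (2 * Real.sqrt (H ^ 2 - 1) * t)) / (2 * H ^ 2 - 2))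

theorem stmt_11 (H : ℝ) (hH : H < -1) (C : ℝ)
    (hC1 : 2 * (H + Real.sqrt (H ^ 2 - 1)) < C) (hC0 : C < 0) :
    ∀ t : ℝ,
      (deriv (profileF H C) t) ^ 2 + (profileF H C t) ^ (-2 : ℤ)
        + (H ^ 2 - 1) * (profileF H C t) ^ 2 + 2 * H = C := by
  intro t
  have hH2 : (0:ℝ) < H ^ 2 - 1 := by nlinarith
  set s := Real.sqrt (H ^ 2 - 1) with hs
  have hs2 : s ^ 2 = H ^ 2 - 1 := Real.sq_sqrt hH2.le
  have hspos : 0 < s := Real.sqrt_pos.mpr hH2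
  have hCH : 2 * s < C - 2 * H := by linarith
  have hCHpos : 0 < C - 2 * H := by linarith
  have hD : (0:ℝ) < 4 + C ^ 2 - 4 * C * H := by nlinarith
  set B := Real.sqrt (4 + C ^ 2 - 4 * C * H) with hB
  have hB2 : B ^ 2 = 4 + C ^ 2 - 4 * C * H := Real.sq_sqrt hD.le
  have hBnn : 0 ≤ B := Real.sqrt_nonneg _
  have hBlt : B < C - 2 * H := by nlinarith
  have ha : (0:ℝ) < 2 * H ^ 2 - 2 := by nlinarith
  set g : ℝ → ℝ := fun u => (C - 2 * H + B * Real.sin (2 * s * u)) / (2 * H ^ 2 - 2) with hg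
  have hgpos : ∀ u, 0 < g u := by
    intro u
    have h1 : -1 ≤ Real.sin (2 * s * u) := Real.neg_one_le_sin _
    have h2 : -B ≤ B * Real.sin (2 * s * u) := by nlinarith
    have h3 : 0 < C - 2 * H + B * Real.sin (2 * s * u) := by linarith
    exact div_pos h3 ha
  have hgderiv : HasDerivAt g (B * (Real.cos (2 * s * t) * (2 * s)) / (2 * H ^ 2 - 2)) t := by
    have h1 : HasDerivAt (fun u : ℝ => 2 * s * u) (2 * s) t := by
      simpa using (hasDerivAt_id t).const_mul (2 * s)
    have h2 : HasDerivAt (fun u => Real.sin (2 * s * u)) (Real.cos (2 * s * t) * (2 * s)) t :=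
      (Real.hasDerivAt_sin _).comp t h1
    exact (((h2.const_mul B).const_add (C - 2 * H)).div_const (2 * H ^ 2 - 2))
  have hprof : profileF H C = fun u => Real.sqrt (g u) := by
    funext u; rfl
  have hfderiv : HasDerivAt (profileF H C)
      (B * (Real.cos (2 * s * t) * (2 * s)) / (2 * H ^ 2 - 2) / (2 * Real.sqrt (g t))) t := by
    rw [hprof]
    exact hgderiv.sqrt (hgpos t).ne'
  have hf : profileF H C t = Real.sqrt (g t) := by rw [hprof]
  rw [hfderiv.deriv, hf]
  set r := Real.sqrt (g t) with hr
  have hrpos : 0 < r := Real.sqrt_pos.mpr (hgpos t)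
  have hr2 : r ^ 2 * (2 * H ^ 2 - 2) = C - 2 * H + B * Real.sin (2 * s * t) := by
    have h1 : r ^ 2 = g t := by rw [hr]; exact Real.sq_sqrt (hgpos t).le
    rw [h1]
    show (C - 2 * H + B * Real.sin (2 * s * t)) / (2 * H ^ 2 - 2) * (2 * H ^ 2 - 2) = _
    exact div_mul_cancel₀ _ ha.ne'
  have hsin : Real.sin (2 * s * t) ^ 2 + Real.cos (2 * s * t) ^ 2 = 1 :=
    Real.sin_sq_add_cos_sq _
  have hzpow : r ^ (-2 : ℤ) = 1 / r ^ 2 := by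
    rw [zpow_neg, one_div, show ((2:ℤ)) = ((2:ℕ):ℤ) from rfl, zpow_natCast]
  rw [hzpow]
  have hane : (2 * H ^ 2 - 2) ≠ 0 := ha.ne'
  field_simp
  linear_combination (B ^ 2 * Real.cos (2 * s * t) ^ 2) * hs2
    + (H ^ 2 - 1) * hB2
    + ((H ^ 2 - 1) * B ^ 2) * hsin
    + ((H ^ 2 - 1) * (r ^ 2 * (2 * H ^ 2 - 2) + (C - 2 * H + B * Real.sin (2 * s * t))
        + 4 * H - 2 * C)) * hr2
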